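/- Let f : H → ℝ be a convex differentiable function on a convex set H ⊆ ℝᵈ, and let x ≠ y ∈ H. Let v = (y - x)/‖y - x‖. If v · ∇f(x) ≥ -δ and -v · ∇f(y) ≥ -δ, then |f(x) - f(y)| ≤ ‖x - y‖·δ. -/

import Mathlib

open scoped RealInnerProductSpace

private lemma line_hasDerivAt {d : ℕ} (f : EuclideanSpace ℝ (Fin d) → ℝ)
    (g x y : EuclideanSpace ℝ (Fin d)) (t : ℝ)
    (hg : HasGradientAt f g (x + t • (y - x))) :
    HasDerivAt (fun s : ℝ => f (x + s • (y - x))) ⟪g, y - x⟫ t := by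
  have hc : HasDerivAt (fun s : ℝ => x + s • (y - x)) (y - x) t := by
    simpa using ((hasDerivAt_id t).smul_const (y - x)).const_add x
  have hf := (hasGradientAt_iff_hasFDerivAt.mp hg).comp_hasDerivAt t hc
  simp only [InnerProductSpace.toDual_apply_apply] at hf
  exact hf

/-- Convex differentiable `f` on a convex set `H ⊆ ℝᵈ`: if the directional
derivatives at `x` toward `y` and at `y` away from `x` are both ≥ -δ, then
`|f x - f y| ≤ ‖x - y‖ * δ`. -/
theorem convex_gradient_two_point_bound {d : ℕ}
    (H : Set (EuclideanSpace ℝ (Fin d)))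
    (f : EuclideanSpace ℝ (Fin d) → ℝ)
    (gf : EuclideanSpace ℝ (Fin d) → EuclideanSpace ℝ (Fin d))
    (x y : EuclideanSpace ℝ (Fin d)) (δ : ℝ)
    (hH : Convex ℝ H) (hconv : ConvexOn ℝ H f)
    (hx : x ∈ H) (hy : y ∈ H) (hxy : x ≠ y) (hδ : 0 ≤ δ)
    (hgrad : ∀ z ∈ H, HasGradientAt f (gf z) z)
    (v : EuclideanSpace ℝ (Fin d)) (hv : v = ‖y - x‖⁻¹ • (y - x))
    (h1 : -δ ≤ ⟪v, gf x⟫) (h2 : -δ ≤ -⟪v, gf y⟫) :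
    |f x - f y| ≤ ‖x - y‖ * δ := by
  set g : ℝ → ℝ := fun s => f (x + s • (y - x)) with hgdef
  have hmem : ∀ t ∈ Set.Icc (0:ℝ) 1, x + t • (y - x) ∈ H := by
    intro t ht
    have := hH hx hy (by linarith [ht.1, ht.2] : (0:ℝ) ≤ 1 - t) ht.1 (by ring)
    convert this using 1
    module
  have hlm : ∀ t : ℝ, (AffineMap.lineMap x y : ℝ →ᵃ[ℝ] _) t = x + t • (y - x) := by
    intro t; simp [AffineMap.lineMap_apply]; module
  have hgconv : ConvexOn ℝ (Set.Icc (0:ℝ) 1) g := by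
    have hcomp := hconv.comp_affineMap (AffineMap.lineMap x y)
    have heq : (f ∘ (AffineMap.lineMap x y : ℝ →ᵃ[ℝ] _)) = g := by
      funext t; simp [hgdef, hlm t]
    rw [heq] at hcomp
    refine hcomp.subset ?_ (convex_Icc 0 1)
    intro t ht
    simpa [Set.mem_preimage, hlm t] using hmem t ht
  have hx0 : x + (0:ℝ) • (y - x) = x := by simp
  have hy1 : x + (1:ℝ) • (y - x) = y := by simp
  have hd0 : HasDerivAt g ⟪gf x, y - x⟫ 0 :=
    line_hasDerivAt f (gf x) x y 0 (by rw [hx0]; exact hgrad x hx)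
  have hd1 : HasDerivAt g ⟪gf y, y - x⟫ 1 :=
    line_hasDerivAt f (gf y) x y 1 (by rw [hy1]; exact hgrad y hy)
  have h01 : (0:ℝ) ∈ Set.Icc (0:ℝ) 1 := by norm_num
  have h11 : (1:ℝ) ∈ Set.Icc (0:ℝ) 1 := by norm_num
  have hslope : slope g 0 1 = f y - f x := by
    simp [slope_def_field, hgdef, hx0, hy1]
  have A : ⟪gf x, y - x⟫ ≤ f y - f x := by
    have := hgconv.le_slope_of_hasDerivWithinAt h01 h11 zero_lt_one hd0.hasDerivWithinAt
    rwa [hslope] at this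
  have B : f y - f x ≤ ⟪gf y, y - x⟫ := by
    have := hgconv.slope_le_of_hasDerivWithinAt h01 h11 zero_lt_one hd1.hasDerivWithinAt
    rwa [hslope] at this
  have hn : (0:ℝ) < ‖y - x‖ := by
    rw [norm_pos_iff]; exact sub_ne_zero.mpr (Ne.symm hxy)
  have hvx : ⟪gf x, y - x⟫ = ‖y - x‖ * ⟪v, gf x⟫ := by
    rw [hv, real_inner_smul_left, real_inner_comm]
    field_simp
  have hvy : ⟪gf y, y - x⟫ = ‖y - x‖ * ⟪v, gf y⟫ := by
    rw [hv, real_inner_smul_left, real_inner_comm]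
    field_simp
  rw [hvx] at A
  rw [hvy] at B
  have hub : ⟪v, gf y⟫ ≤ δ := by linarith
  have hnorm : ‖x - y‖ = ‖y - x‖ := norm_sub_rev x y
  rw [abs_le, hnorm]
  constructor
  · nlinarith [mul_le_mul_of_nonneg_left hub (le_of_lt hn)]
  · nlinarith [mul_le_mul_of_nonneg_left h1 (le_of_lt hn)]
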